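/- Let G be a graph, let S be a clique of size d+1 in G, and let u, v be vertices of G. If {u,s} and {v,s} are globally linked in G in ℝ^d for every s ∈ S, then {u,v} is globally linked in G in ℝ^d. -/

import Mathlib

variable {V : Type*}

/-- a `d`-dimensional framework `(G,p)` is generic if the coordinates of the points are
algebraically independent over `ℚ`. -/
def Genericp (d : ℕ) (p : V → EuclideanSpace ℝ (Fin d)) : Prop :=
  AlgebraicIndependent ℚ (fun vi : V × Fin d => p vi.1 vi.2)

/-- `(G,p)` and `(G,q)` are equivalent: corresponding edges have equal lengths. -/
def FEquiv (G : SimpleGraph V) (d : ℕ) (p q : V → EuclideanSpace ℝ (Fin d)) : Prop :=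
  ∀ a b, G.Adj a b → dist (p a) (p b) = dist (q a) (q b)

/-- `(G,p)` and `(G,q)` are congruent. -/
def FCong {d : ℕ} (p q : V → EuclideanSpace ℝ (Fin d)) : Prop :=
  ∀ a b, dist (p a) (p b) = dist (q a) (q b)

/-- orthogonal reflection in the affine span of `s` (the identity for `s = ∅`). -/
noncomputable def reflSpan {d : ℕ} (s : Set (EuclideanSpace ℝ (Fin d))) :
    EuclideanSpace ℝ (Fin d) → EuclideanSpace ℝ (Fin d) :=
  haveI := Classical.propDecidable s.Nonempty
  if h : s.Nonempty then
    haveI : Nonempty s := h.to_subtype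
    fun x => EuclideanGeometry.reflection (affineSpan ℝ s) x
  else id

/-- `(G,p)` is rigid. -/
def RigidFw (G : SimpleGraph V) (d : ℕ) (p : V → EuclideanSpace ℝ (Fin d)) : Prop :=
  ∃ ε > (0 : ℝ), ∀ q, FEquiv G d p q → (∀ w, dist (p w) (q w) < ε) → FCong p q

/-- `G` is rigid in `ℝ^d`. -/
def RigidGraph (G : SimpleGraph V) (d : ℕ) : Prop :=
  ∀ p, Genericp d p → RigidFw G d p

/-- `G` is globally rigid in `ℝ^d`. -/
def GloballyRigidGraph (G : SimpleGraph V) (d : ℕ) : Prop :=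
  ∀ p, Genericp d p → ∀ q, FEquiv G d p q → FCong p q

/-- `{u,v}` is globally linked in `G` in `ℝ^d`. -/
def GloballyLinked (G : SimpleGraph V) (d : ℕ) (u v : V) : Prop :=
  ∀ p q, Genericp d p → FEquiv G d p q → dist (p u) (p v) = dist (q u) (q v)

section Helpers

open scoped RealInnerProductSpace
open Finset MvPolynomial Matrix

variable {E : Type*} [NormedAddCommGroup E] [InnerProductSpace ℝ E]

lemma inner_eq_of_dist_eq {x y z x' y' z' : E}
    (h1 : dist x z = dist x' z') (h2 : dist y z = dist y' z')
    (h3 : dist x y = dist x' y') :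
    ⟪x - z, y - z⟫ = ⟪x' - z', y' - z'⟫ := by
  have e : ∀ a b : E, ⟪a, b⟫ = (‖a‖ ^ 2 + ‖b‖ ^ 2 - ‖a - b‖ ^ 2) / 2 := by
    intro a b
    rw [@norm_sub_sq_real]; ring
  rw [e, e, show x - z - (y - z) = x - y by abel, show x' - z' - (y' - z') = x' - y' by abel]
  simp only [← dist_eq_norm, h1, h2, h3]

lemma rep_eq {ι : Type*} [Fintype ι] {x x' : E} {e f : ι → E} {c : ι → ℝ}
    (hxx : ⟪x, x⟫ = ⟪x', x'⟫) (hxe : ∀ i, ⟪x, e i⟫ = ⟪x', f i⟫)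
    (hef : ∀ i j, ⟪e i, e j⟫ = ⟪f i, f j⟫)
    (hx : x = ∑ i, c i • e i) : x' = ∑ i, c i • f i := by
  have key : ⟪x' - ∑ i, c i • f i, x' - ∑ i, c i • f i⟫
      = ⟪x - ∑ i, c i • e i, x - ∑ i, c i • e i⟫ := by
    have hxe' : ∀ i, ⟪e i, x⟫ = ⟪f i, x'⟫ := fun i => by
      rw [real_inner_comm, hxe, real_inner_comm]
    simp only [inner_sub_left, inner_sub_right, sum_inner, inner_sum,
      real_inner_smul_left, real_inner_smul_right, hxx, hxe, hxe', hef]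
  rw [← hx, sub_self, inner_zero_left] at key
  exact sub_eq_zero.mp (inner_self_eq_zero (𝕜 := ℝ).mp key)

lemma norm_sum_eq {ι : Type*} [Fintype ι] {e f : ι → E} {c : ι → ℝ}
    (hef : ∀ i j, ⟪e i, e j⟫ = ⟪f i, f j⟫) :
    ‖∑ i, c i • e i‖ = ‖∑ i, c i • f i‖ := by
  have key : ⟪∑ i, c i • e i, ∑ i, c i • e i⟫ = ⟪∑ i, c i • f i, ∑ i, c i • f i⟫ := by
    simp only [sum_inner, inner_sum, real_inner_smul_left, real_inner_smul_right, hef]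
  have h1 : ‖∑ i, c i • e i‖ ^ 2 = ‖∑ i, c i • f i‖ ^ 2 := by
    rw [← real_inner_self_eq_norm_sq, ← real_inner_self_eq_norm_sq, key]
  have := congrArg Real.sqrt h1
  rwa [Real.sqrt_sq (norm_nonneg _), Real.sqrt_sq (norm_nonneg _)] at this

lemma generic_li {d : ℕ} {p : V → EuclideanSpace ℝ (Fin d)}
    (hp : Genericp d p) {s : Fin (d + 1) → V} (hs : Function.Injective s) :
    LinearIndependent ℝ (fun i : Fin d => p (s i.succ) - p (s 0)) := by
  classical
  set N : Matrix (Fin d) (Fin d) (MvPolynomial (V × Fin d) ℚ) :=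
    Matrix.of fun i j => X (s i.succ, j) - X (s 0, j) with hN
  have hdet : N.det ≠ 0 := by
    intro h0
    set g : V × Fin d → ℚ := fun wj => if wj.1 = s wj.2.succ then 1 else 0 with hg
    have h1 : (aeval g) N.det = (N.map (aeval g)).det := RingHom.map_det _ _
    have h2 : N.map (aeval g) = 1 := by
      ext i j
      simp only [Matrix.map_apply, hN, Matrix.of_apply, map_sub, aeval_X, hg]
      have h3 : s i.succ = s j.succ ↔ i = j := by
        constructor
        · intro hh; exact Fin.succ_injective d (hs hh)
        · rintro rfl; rfl
      have h4 : s 0 ≠ s j.succ := fun hh => (Fin.succ_ne_zero j).symm (hs hh)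
      rw [if_neg h4]
      by_cases hij : i = j
      · subst hij; rw [if_pos rfl]; simp [Matrix.one_apply]
      · rw [if_neg (fun hh => hij (h3.mp hh))]
        simp [Matrix.one_apply, hij]
    rw [h0, map_zero] at h1
    rw [h2, Matrix.det_one] at h1
    exact one_ne_zero h1.symm
  set f : V × Fin d → ℝ := fun vi => p vi.1 vi.2 with hf
  have hinj : Function.Injective (aeval f : MvPolynomial (V × Fin d) ℚ →ₐ[ℚ] ℝ) := hp
  have hMdet : ((Matrix.of fun i j => p (s i.succ) j - p (s 0) j) :
      Matrix (Fin d) (Fin d) ℝ).det ≠ 0 := by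
    have h1 : (aeval f) N.det = (N.map (aeval f)).det := RingHom.map_det _ _
    have h2 : N.map (aeval f) = Matrix.of fun i j => p (s i.succ) j - p (s 0) j := by
      ext i j
      simp [hN, hf]
    intro h0
    exact hdet (hinj (by rw [h1, h2, h0, map_zero]))
  have hunit : IsUnit ((Matrix.of fun i j => p (s i.succ) j - p (s 0) j) :
      Matrix (Fin d) (Fin d) ℝ) := by
    rw [Matrix.isUnit_iff_isUnit_det, isUnit_iff_ne_zero]
    exact hMdet
  have hrow := Matrix.linearIndependent_rows_iff_isUnit.mpr hunit
  refine LinearIndependent.of_comp (WithLp.linearEquiv 2 ℝ (Fin d → ℝ)).toLinearMap ?_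
  convert hrow using 1
  · ext i j; simp
  all_goals rfl

end Helpers

open scoped RealInnerProductSpace in
theorem stmt14 {V : Type*} [Fintype V] [DecidableEq V] (G : SimpleGraph V) (d : ℕ)
    (S : Finset V) (hcard : S.card = d + 1)
    (hclique : ∀ a ∈ S, ∀ b ∈ S, a ≠ b → G.Adj a b)
    (u v : V)
    (h : ∀ s ∈ S, GloballyLinked G d u s ∧ GloballyLinked G d v s) :
    GloballyLinked G d u v := by
  rcases Nat.eq_zero_or_pos d with rfl | hd
  · intro p q _ _
    have h1 : p u = p v := by ext i; exact i.elim0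
    have h2 : q u = q v := by ext i; exact i.elim0
    rw [h1, h2]
    simp
  intro p q hp hpq
  haveI : Nonempty (Fin d) := ⟨⟨0, hd⟩⟩
  set s : Fin (d + 1) → V := fun i => (S.equivFin.symm (Fin.cast hcard.symm i) : V) with hsdef
  have hsmem : ∀ k, s k ∈ S := fun k => (S.equivFin.symm (Fin.cast hcard.symm k)).2
  have hsinj : Function.Injective s := by
    intro i j hij
    have h1 : S.equivFin.symm (Fin.cast hcard.symm i)
        = S.equivFin.symm (Fin.cast hcard.symm j) := Subtype.ext hij
    have h2 := S.equivFin.symm.injective h1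
    have h3 : (Fin.cast hcard.symm i).val = (Fin.cast hcard.symm j).val := congrArg Fin.val h2
    exact Fin.ext h3
  -- distance equalities
  have hus : ∀ k, dist (p u) (p (s k)) = dist (q u) (q (s k)) :=
    fun k => (h (s k) (hsmem k)).1 p q hp hpq
  have hvs : ∀ k, dist (p v) (p (s k)) = dist (q v) (q (s k)) :=
    fun k => (h (s k) (hsmem k)).2 p q hp hpq
  have hss : ∀ k l, dist (p (s k)) (p (s l)) = dist (q (s k)) (q (s l)) := by
    intro k l
    by_cases hkl : k = l
    · subst hkl; simp
    · exact hpq _ _ (hclique _ (hsmem k) _ (hsmem l) fun hh => hkl (hsinj hh))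
  -- inner product equalities
  set e : Fin d → EuclideanSpace ℝ (Fin d) := fun i => p (s i.succ) - p (s 0) with he
  set f : Fin d → EuclideanSpace ℝ (Fin d) := fun i => q (s i.succ) - q (s 0) with hf
  have hef : ∀ i j, ⟪e i, e j⟫ = ⟪f i, f j⟫ :=
    fun i j => inner_eq_of_dist_eq (hss i.succ 0) (hss j.succ 0) (hss i.succ j.succ)
  have hue : ∀ i, ⟪p u - p (s 0), e i⟫ = ⟪q u - q (s 0), f i⟫ :=
    fun i => inner_eq_of_dist_eq (hus 0) (hss i.succ 0) (hus i.succ)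
  have hve : ∀ i, ⟪p v - p (s 0), e i⟫ = ⟪q v - q (s 0), f i⟫ :=
    fun i => inner_eq_of_dist_eq (hvs 0) (hss i.succ 0) (hvs i.succ)
  have huu : ⟪p u - p (s 0), p u - p (s 0)⟫ = ⟪q u - q (s 0), q u - q (s 0)⟫ :=
    inner_eq_of_dist_eq (hus 0) (hus 0) (by simp)
  have hvv : ⟪p v - p (s 0), p v - p (s 0)⟫ = ⟪q v - q (s 0), q v - q (s 0)⟫ :=
    inner_eq_of_dist_eq (hvs 0) (hvs 0) (by simp)
  -- basis of ℝ^d from the generic points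
  have hli : LinearIndependent ℝ e := generic_li hp hsinj
  have hcards : Fintype.card (Fin d) = Module.finrank ℝ (EuclideanSpace ℝ (Fin d)) := by
    simp [finrank_euclideanSpace_fin]
  set B := basisOfLinearIndependentOfCardEqFinrank hli hcards with hB
  have hBe : ∀ i, B i = e i := fun i => by
    rw [hB, coe_basisOfLinearIndependentOfCardEqFinrank]
  set a : Fin d → ℝ := fun i => B.repr (p u - p (s 0)) i with ha
  set b : Fin d → ℝ := fun i => B.repr (p v - p (s 0)) i with hbdef
  have hxa : p u - p (s 0) = ∑ i, a i • e i := by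
    conv_lhs => rw [← B.sum_repr (p u - p (s 0))]
    exact Finset.sum_congr rfl fun i _ => by rw [hBe]
  have hxb : p v - p (s 0) = ∑ i, b i • e i := by
    conv_lhs => rw [← B.sum_repr (p v - p (s 0))]
    exact Finset.sum_congr rfl fun i _ => by rw [hBe]
  have hqa : q u - q (s 0) = ∑ i, a i • f i := rep_eq huu hue hef hxa
  have hqb : q v - q (s 0) = ∑ i, b i • f i := rep_eq hvv hve hef hxb
  have hpdiff : p u - p v = ∑ i, (a i - b i) • e i := by
    have : p u - p v = (p u - p (s 0)) - (p v - p (s 0)) := by abel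
    rw [this, hxa, hxb, ← Finset.sum_sub_distrib]
    exact Finset.sum_congr rfl fun i _ => by rw [sub_smul]
  have hqdiff : q u - q v = ∑ i, (a i - b i) • f i := by
    have : q u - q v = (q u - q (s 0)) - (q v - q (s 0)) := by abel
    rw [this, hqa, hqb, ← Finset.sum_sub_distrib]
    exact Finset.sum_congr rfl fun i _ => by rw [sub_smul]
  rw [dist_eq_norm, dist_eq_norm, hpdiff, hqdiff]
  exact norm_sum_eq hef
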